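/- arXiv:math/0412348 — 2 statements merged into one kernel-verified Lean document; each statement's English description precedes it below -/
import Mathlib

section
/- For every i ∈ ℕ, every p ∈ [0,1], every n ∈ ℕ and every sample point ω ∈ Ω: if _pX̄^{(∞)}_n(ω) < _pX̄^{(i)}_n(ω), then _pX^{(∞)}_n(m)(ω) = 0 for every m ∈ ℤ_n with m ≥ n − 2i. Equivalently, the event { _pX̄^{(i)}_n ≠ _pX̄^{(∞)}_n } is contained in the event that the oriented percolation process at time n has no infected site at any m ≥ n − 2i. -/
open MeasureTheory ProbabilityTheory Filter Set
open scoped ENat ENNReal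

noncomputable section

/-- Direction of a bond: `true` = right (`+1`), `false` = left (`-1`). -/
def dir (j : Bool) : ℤ := if j then 1 else -1

/-- An environment: a realization of the family of uniform random variables
`ξ^j_{n,m}`, indexed by time `n`, space `m` and direction `j`. -/
abbrev Env := ℕ → ℤ → Bool → ℝ

/-- The bond from site `(n,m)` in direction `j` is open at level `p`,
i.e. the Bernoulli variable `_pξ^j_{n,m} = 1_{ξ^j_{n,m} ≤ p}` equals `1`. -/
def bondOpen (p : ℝ) (u : Env) (n : ℕ) (m : ℤ) (j : Bool) : Bool :=
  @decide (u n m j ≤ p) (Classical.propDecidable _)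

/-- The position of the right edge after one step from configuration `c` at time `n`:
`sup { m + j : c m = 1, bond (n,m,j) open }`. -/
def nextEdge (p : ℝ) (u : Env) (n : ℕ) (c : ℤ → Bool) : ℤ :=
  sSup {x : ℤ | ∃ m j, c m = true ∧ bondOpen p u n m j = true ∧ x = m + dir j}

/-- Forced (re)infection indicator for a site lying at (even) distance `d`
behind the new edge, when `d > 2i`; for `i = ∞` there is no forced infection. -/
def forced (i : ℕ∞) (d : ℤ) : Bool :=
  @decide (Even d ∧ 2 * i < (d.toNat : ℕ∞)) (Classical.propDecidable _)

/-- The strengthened discrete-time contact process (SDTCP) of order `i ∈ ℕ ∪ {∞}`,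
with infection parameter `p`, environment `u`, and initial configuration `η`. -/
def Xproc (i : ℕ∞) (p : ℝ) (u : Env) (η : ℤ → Bool) : ℕ → ℤ → Bool
  | 0 => η
  | n + 1 => fun m =>
      (Xproc i p u η n (m - 1) && bondOpen p u n (m - 1) true) ||
      (Xproc i p u η n (m + 1) && bondOpen p u n (m + 1) false) ||
      forced i (nextEdge p u n (Xproc i p u η n) - m)

/-- The right edge process, with the convention `edge 0 = 0`. -/
def edge (i : ℕ∞) (p : ℝ) (u : Env) (η : ℤ → Bool) : ℕ → ℤ
  | 0 => 0
  | n + 1 => nextEdge p u n (Xproc i p u η n)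

/-- The standard initial configuration `1_{· ≤ 0}` on the even sites. -/
def η₀ : ℤ → Bool := fun m => @decide (m ≤ 0 ∧ Even m) (Classical.propDecidable _)

/-- States of the induced Markov chain of order `i`: configurations of the `i`
sites at distances `2, 4, …, 2i` behind the right edge. -/
abbrev IMCState (i : ℕ) := Fin i → Bool

/-- The induced Markov chain: `Y n (j) = X n (edge n − 2(j+1))`. -/
def Yproc (i : ℕ) (p : ℝ) (u : Env) (η : ℤ → Bool) (n : ℕ) : IMCState i :=
  fun j => Xproc (i : ℕ∞) p u η n (edge (i : ℕ∞) p u η n - 2 * ((j : ℤ) + 1))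

/-- The initial configuration `η_σ` associated with a state `σ` of the induced
Markov chain: edge at `0`, configuration `σ` at `−2, …, −2i`, everything
infected below `−2i`, everything healthy above `0`. -/
def ησ (i : ℕ) (σ : IMCState i) : ℤ → Bool := fun m =>
  @decide (Even m ∧ (m = 0 ∨ m < -(2 * (i : ℤ)) ∨
      ∃ j : Fin i, m = -(2 * ((j : ℤ) + 1)) ∧ σ j = true))
    (Classical.propDecidable _)

variable {Ω : Type*}

/-- The probabilistic set-up: `ℙ` is a probability measure and the `ξ^j_{n,m}`
are i.i.d. random variables, uniformly distributed on `[0,1]`. -/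
def UniformBonds [MeasureSpace Ω] (ξ : Ω → Env) : Prop :=
  IsProbabilityMeasure (ℙ : Measure Ω) ∧
  (∀ n m j, Measurable fun ω => ξ ω n m j) ∧
  iIndepFun (m := fun _ : ℕ × ℤ × Bool => (inferInstance : MeasurableSpace ℝ))
    (fun v ω => ξ ω v.1 v.2.1 v.2.2) ℙ ∧
  ∀ n m j, (ℙ : Measure Ω).map (fun ω => ξ ω n m j)
      = (volume : Measure ℝ).restrict (Set.Icc 0 1)

/-- Transition probability `q^{(i)}_{στ}(p)` of the induced Markov chain:
the probability that one step of the chain started from state `σ` leads to `τ`. -/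
def kernel [MeasureSpace Ω] (ξ : Ω → Env) (i : ℕ) (p : ℝ) (σ τ : IMCState i) : ℝ :=
  (ℙ {ω | Yproc i p (ξ ω) (ησ i σ) 1 = τ}).toReal

/-- `π` is a stationary probability distribution for the induced Markov chain. -/
def IsStationaryIMC [MeasureSpace Ω] (ξ : Ω → Env) (i : ℕ) (p : ℝ)
    (π : IMCState i → ℝ) : Prop :=
  (∀ σ, 0 ≤ π σ) ∧ (∑ σ, π σ = 1) ∧
    ∀ τ, (∑ σ, π σ * kernel ξ i p σ τ) = π τ

/-- The mean jump `M^{(i)}_σ(p)` of the right edge from state `σ`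
(Definition 2.4): `Σ_k Σ_τ (1 − 2k) P^{(i)}_{(σ,τ,k)}(p)`. -/
def meanJump [MeasureSpace Ω] (ξ : Ω → Env) (i : ℕ) (p : ℝ) (σ : IMCState i) : ℝ :=
  ∑' k : ℕ, ∑ τ : IMCState i, (1 - 2 * (k : ℝ)) *
    (ℙ {ω | edge (i : ℕ∞) p (ξ ω) (ησ i σ) 1 = 1 - 2 * (k : ℤ) ∧
        Yproc i p (ξ ω) (ησ i σ) 1 = τ}).toReal

/-- The mean edge drift `M^{(i)}(p)` computed from a stationary measure `π`
(Definition 2.5). -/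
def meanDrift [MeasureSpace Ω] (ξ : Ω → Env) (i : ℕ) (p : ℝ)
    (π : IMCState i → ℝ) : ℝ :=
  ∑ σ, meanJump ξ i p σ * π σ

/-- `a ∈ ℝ ∪ {±∞}` is the almost sure asymptotic speed of the right edge of the
process of order `i ∈ ℕ ∪ {∞}` started from `1_{· ≤ 0}`. -/
def IsEdgeSpeed [MeasureSpace Ω] (ξ : Ω → Env) (i : ℕ∞) (p : ℝ) (a : EReal) : Prop :=
  ∀ᵐ ω ∂ℙ, Tendsto (fun n : ℕ => (((edge i p (ξ ω) η₀ n : ℤ) : ℝ) / n : EReal))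
    atTop (nhds a)

/-- `pc i = p_c^{(i)}` is, for each `i ∈ ℕ`, a root in `(0,1]` of the mean edge
drift `M^{(i)}` (computed from a stationary measure of the induced chain). -/
def IsCriticalSeq [MeasureSpace Ω] (ξ : Ω → Env) (pc : ℕ → ℝ) : Prop :=
  ∀ i, pc i ∈ Set.Ioc (0 : ℝ) 1 ∧
    ∃ π, IsStationaryIMC ξ i (pc i) π ∧ meanDrift ξ i (pc i) π = 0

lemma forced_top' (d : ℤ) : forced ⊤ d = false := by
  refine @decide_eq_false _ (Classical.propDecidable _) ?_
  rintro ⟨-, h⟩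
  rw [show (2 : ℕ∞) * ⊤ = ⊤ from WithTop.mul_top (by exact two_ne_zero)] at h
  exact not_top_lt h

lemma forced_nonpos' (i : ℕ∞) (d : ℤ) (h : d ≤ 0) : forced i d = false := by
  refine @decide_eq_false _ (Classical.propDecidable _) ?_
  rintro ⟨-, hlt⟩
  rw [Int.toNat_of_nonpos h] at hlt
  simp at hlt

lemma forced_false_of_le' (i : ℕ) (d : ℤ) (h : d ≤ 2 * (i : ℤ) + 1) :
    forced (i : ℕ∞) d = false := by
  refine @decide_eq_false _ (Classical.propDecidable _) ?_
  rintro ⟨he, hlt⟩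
  have h2 : 2 * i < d.toNat := by exact_mod_cast hlt
  rw [Int.even_iff] at he
  omega

lemma nextEdge_le' (p : ℝ) (u : Env) (n : ℕ) (c : ℤ → Bool)
    (hc : ∀ m : ℤ, (n : ℤ) < m → c m = false) :
    nextEdge p u n c ≤ (n : ℤ) + 1 := by
  unfold nextEdge
  by_cases hS : {x : ℤ | ∃ m j, c m = true ∧ bondOpen p u n m j = true ∧ x = m + dir j}.Nonempty
  · apply csSup_le hS
    rintro x ⟨m, j, hm, -, rfl⟩
    have hmn : m ≤ (n : ℤ) := by
      by_contra h
      rw [hc m (by omega)] at hm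
      exact absurd hm (by simp)
    have hd : dir j ≤ 1 := by cases j <;> simp [dir]
    omega
  · rw [Set.not_nonempty_iff_eq_empty.mp hS, Int.csSup_empty]
    positivity

lemma X_vanish' (p : ℝ) (u : Env) (i : ℕ∞) :
    ∀ (n : ℕ) (m : ℤ), (n : ℤ) < m → Xproc i p u η₀ n m = false := by
  intro n
  induction n with
  | zero =>
    intro m hm
    show η₀ m = false
    refine @decide_eq_false _ (Classical.propDecidable _) ?_
    rintro ⟨h1, -⟩
    push_cast at hm
    omega
  | succ n ih =>
    intro m hm
    push_cast at hm
    have hE : nextEdge p u n (Xproc i p u η₀ n) ≤ (n : ℤ) + 1 :=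
      nextEdge_le' p u n _ (fun q hq => ih q hq)
    simp only [Xproc]
    rw [ih (m - 1) (by omega), ih (m + 1) (by omega),
      forced_nonpos' i _ (by omega)]
    simp

lemma X_mono' (p : ℝ) (u : Env) (i : ℕ∞) (η : ℤ → Bool) :
    ∀ (n : ℕ) (m : ℤ), Xproc ⊤ p u η n m = true → Xproc i p u η n m = true := by
  intro n
  induction n with
  | zero => intro m h; exact h
  | succ n ih =>
    intro m h
    simp only [Xproc, forced_top', Bool.or_false, Bool.or_eq_true, Bool.and_eq_true] at h
    simp only [Xproc, Bool.or_eq_true, Bool.and_eq_true]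
    rcases h with ⟨h1, h2⟩ | ⟨h1, h2⟩
    · exact Or.inl (Or.inl ⟨ih _ h1, h2⟩)
    · exact Or.inl (Or.inr ⟨ih _ h1, h2⟩)

lemma X_window' (p : ℝ) (u : Env) (i : ℕ) :
    ∀ (n : ℕ) (m : ℤ), (n : ℤ) - 2 * i - 1 ≤ m →
      Xproc (i : ℕ∞) p u η₀ n m = Xproc ⊤ p u η₀ n m := by
  intro n
  induction n with
  | zero => intro m _; rfl
  | succ n ih =>
    intro m hm
    push_cast at hm
    have hE : nextEdge p u n (Xproc (i : ℕ∞) p u η₀ n) ≤ (n : ℤ) + 1 :=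
      nextEdge_le' p u n _ (fun q hq => X_vanish' p u _ n q hq)
    simp only [Xproc]
    rw [ih (m - 1) (by omega), ih (m + 1) (by omega), forced_top',
      forced_false_of_le' i _ (by omega)]

lemma edge_eq' (p : ℝ) (u : Env) (i : ℕ) (n : ℕ) (m₀ : ℤ)
    (h₀ : (n : ℤ) - 2 * i ≤ m₀) (hx : Xproc ⊤ p u η₀ n m₀ = true) :
    edge (i : ℕ∞) p u η₀ n = edge ⊤ p u η₀ n := by
  cases n with
  | zero => rfl
  | succ n =>
    push_cast at h₀
    simp only [Xproc, forced_top', Bool.or_false, Bool.or_eq_true, Bool.and_eq_true] at hx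
    simp only [edge, nextEdge]
    set Si := {x : ℤ | ∃ m j, Xproc (i : ℕ∞) p u η₀ n m = true ∧
      bondOpen p u n m j = true ∧ x = m + dir j} with hSi
    set Sinf := {x : ℤ | ∃ m j, Xproc ⊤ p u η₀ n m = true ∧
      bondOpen p u n m j = true ∧ x = m + dir j} with hSinf
    have hsub : Sinf ⊆ Si := by
      rintro x ⟨m, j, hmX, ho, rfl⟩
      exact ⟨m, j, X_mono' p u _ _ n m hmX, ho, rfl⟩
    have hbddi : BddAbove Si := by
      refine ⟨(n : ℤ) + 1, ?_⟩
      rintro x ⟨m, j, hmX, -, rfl⟩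
      have hmn : m ≤ (n : ℤ) := by
        by_contra h
        rw [X_vanish' p u _ n m (by omega)] at hmX
        exact absurd hmX (by simp)
      have hd : dir j ≤ 1 := by cases j <;> simp [dir]
      omega
    have hbddinf : BddAbove Sinf := hbddi.mono hsub
    have hm₀ : m₀ ∈ Sinf := by
      rcases hx with ⟨h1, h2⟩ | ⟨h1, h2⟩
      · exact ⟨m₀ - 1, true, h1, h2, by simp [dir]⟩
      · exact ⟨m₀ + 1, false, h1, h2, by simp [dir]⟩
    have hneinf : Sinf.Nonempty := ⟨m₀, hm₀⟩
    have h1 : sSup Sinf ≤ sSup Si := csSup_le_csSup hbddi hneinf hsub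
    have hm₀le : m₀ ≤ sSup Sinf := le_csSup hbddinf hm₀
    have h2 : sSup Si ≤ sSup Sinf := by
      apply csSup_le (hneinf.mono hsub)
      rintro x ⟨m, j, hmX, ho, rfl⟩
      by_cases hT : Xproc ⊤ p u η₀ n m = true
      · exact le_csSup hbddinf ⟨m, j, hT, ho, rfl⟩
      · have hw : ¬((n : ℤ) - 2 * i - 1 ≤ m) := fun hwin => by
          rw [X_window' p u i n m hwin] at hmX
          exact hT hmX
        have hd : dir j ≤ 1 := by cases j <;> simp [dir]
        have : m + dir j ≤ m₀ := by omega
        exact this.trans hm₀le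
    exact le_antisymm h2 h1

/-- For every `i ∈ ℕ`, every `p ∈ [0,1]`, every `n ∈ ℕ` and every sample point
(environment) `u`: if `_pX̄^{(∞)}_n < _pX̄^{(i)}_n`, then
`_pX^{(∞)}_n(m) = 0` for every `m ∈ ℤ_n` with `m ≥ n − 2i`; equivalently, on
the event where the two right edges differ, the oriented percolation process
at time `n` has no infected site at any `m ≥ n − 2i`. -/
theorem edge_differ_implies_empty (u : Env)
    (hu : ∀ n m j, u n m j ∈ Set.Icc (0 : ℝ) 1)
    (i : ℕ) (p : ℝ) (hp : p ∈ Set.Icc (0 : ℝ) 1) (n : ℕ) :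
    (edge ⊤ p u η₀ n < edge (i : ℕ∞) p u η₀ n →
      ∀ m : ℤ, Even ((n : ℤ) + m) → (n : ℤ) - 2 * i ≤ m →
        Xproc ⊤ p u η₀ n m = false) ∧
    (edge (i : ℕ∞) p u η₀ n ≠ edge ⊤ p u η₀ n →
      ∀ m : ℤ, Even ((n : ℤ) + m) → (n : ℤ) - 2 * i ≤ m →
        Xproc ⊤ p u η₀ n m = false) := by
  have key : edge (i : ℕ∞) p u η₀ n ≠ edge ⊤ p u η₀ n →
      ∀ m : ℤ, Even ((n : ℤ) + m) → (n : ℤ) - 2 * i ≤ m →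
        Xproc ⊤ p u η₀ n m = false := by
    intro hne m _ hge
    by_contra hx
    have hx' : Xproc ⊤ p u η₀ n m = true := by
      revert hx; cases Xproc ⊤ p u η₀ n m <;> simp
    exact hne (edge_eq' p u i n m hge hx')
  exact ⟨fun h => key (ne_of_gt h), key⟩
end
end

section
/- (Lemma 3.8.) For every fixed n ∈ ℕ and every p ∈ (0,1], lim_{i→∞} E[ _pX̄^{(i)}_n ] = E[ _pX̄^{(∞)}_n ]; moreover the convergence is monotone: E[ _pX̄^{(i)}_n ] decreases in i to E[ _pX̄^{(∞)}_n ]. -/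
open MeasureTheory ProbabilityTheory Filter Set
open scoped ENat ENNReal

noncomputable section

variable {Ω : Type*}

namespace L38

/-- The set whose supremum is `nextEdge`. -/
def ES (p : ℝ) (u : Env) (k : ℕ) (c : ℤ → Bool) : Set ℤ :=
  {x : ℤ | ∃ m j, c m = true ∧ bondOpen p u k m j = true ∧ x = m + dir j}

lemma nextEdge_def (p : ℝ) (u : Env) (k : ℕ) (c : ℤ → Bool) :
    nextEdge p u k c = sSup (ES p u k c) := rfl

lemma dir_le_one (j : Bool) : dir j ≤ 1 := by cases j <;> simp [dir]

lemma neg_one_le_dir (j : Bool) : -1 ≤ dir j := by cases j <;> simp [dir]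

lemma forced_top (d : ℤ) : forced ⊤ d = false := by
  simp only [forced, decide_eq_false_iff_not]
  rintro ⟨-, h⟩
  rw [show (2 : ℕ∞) * ⊤ = ⊤ from ENat.mul_top (by norm_num)] at h
  exact not_top_lt h

lemma forced_coe_false {i : ℕ} {d : ℤ} (h : d ≤ 2 * (i : ℤ)) : forced (i : ℕ∞) d = false := by
  simp only [forced, decide_eq_false_iff_not]
  rintro ⟨-, hlt⟩
  have h1 : d.toNat ≤ 2 * i := by omega
  have h2 : ((d.toNat : ℕ) : ℕ∞) ≤ ((2 * i : ℕ) : ℕ∞) := Nat.cast_le.2 h1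
  rw [Nat.cast_mul] at h2
  exact absurd hlt (not_lt.2 (h2.trans_eq (by norm_num)))

lemma forced_mono {i i' : ℕ∞} (hii : i ≤ i') {d d' : ℤ} (hdd : d' ≤ d)
    (hpar : Even (d - d')) (h : forced i' d' = true) : forced i d = true := by
  simp only [forced, decide_eq_true_eq] at h ⊢
  obtain ⟨he, hlt⟩ := h
  refine ⟨by simpa using hpar.add he, ?_⟩
  calc 2 * i ≤ 2 * i' := mul_le_mul_right hii 2
    _ < (d'.toNat : ℕ∞) := hlt
    _ ≤ (d.toNat : ℕ∞) := Nat.cast_le.2 (Int.toNat_le_toNat hdd)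

lemma ES_subset_Iic {p : ℝ} {u : Env} {k : ℕ} {c : ℤ → Bool} {K : ℤ}
    (hc : ∀ m, c m = true → m ≤ K) : ES p u k c ⊆ Set.Iic (K + 1) := by
  rintro x ⟨m, j, hm, -, rfl⟩
  have := hc m hm
  have := dir_le_one j
  simp only [Set.mem_Iic]
  omega

lemma ES_bddAbove {p : ℝ} {u : Env} {k : ℕ} {c : ℤ → Bool} {K : ℤ}
    (hc : ∀ m, c m = true → m ≤ K) : BddAbove (ES p u k c) :=
  ⟨K + 1, fun x hx => ES_subset_Iic hc hx⟩

lemma nextEdge_le {p : ℝ} {u : Env} {k : ℕ} {c : ℤ → Bool} {K : ℤ}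
    (hc : ∀ m, c m = true → m ≤ K) (hK : 0 ≤ K + 1) : nextEdge p u k c ≤ K + 1 := by
  rw [nextEdge_def]
  rcases Set.eq_empty_or_nonempty (ES p u k c) with h | h
  · rw [h, Int.csSup_empty]; exact hK
  · exact csSup_le h fun x hx => ES_subset_Iic hc hx

lemma X_le (i : ℕ∞) (p : ℝ) (u : Env) : ∀ k m, Xproc i p u η₀ k m = true → m ≤ (k : ℤ) := by
  intro k
  induction k with
  | zero =>
    intro m h
    simp only [Xproc, η₀, decide_eq_true_eq] at h
    exact_mod_cast h.1
  | succ k ih =>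
    intro m h
    simp only [Xproc, Bool.or_eq_true, Bool.and_eq_true] at h
    rcases h with (⟨h1, -⟩ | ⟨h1, -⟩) | hf
    · have := ih _ h1; push_cast; omega
    · have := ih _ h1; push_cast; omega
    · simp only [forced, decide_eq_true_eq] at hf
      obtain ⟨-, hlt⟩ := hf
      set e := nextEdge p u k (Xproc i p u η₀ k) with he
      have hpos : 0 < (e - m).toNat := by
        by_contra h0
        rw [show (e - m).toNat = 0 by omega] at hlt
        exact absurd hlt (by simp)
      have hek : e ≤ (k : ℤ) + 1 := nextEdge_le ih (by positivity)
      push_cast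
      omega

lemma edge_le (i : ℕ∞) (p : ℝ) (u : Env) : ∀ k, edge i p u η₀ k ≤ (k : ℤ) := by
  intro k
  cases k with
  | zero => simp [edge]
  | succ k =>
    show nextEdge p u k (Xproc i p u η₀ k) ≤ _
    have h := nextEdge_le (p := p) (u := u) (k := k) (X_le i p u k) (by positivity)
    push_cast
    omega

end L38
namespace L38

section Path

variable {p : ℝ} {u : Env} {n j₀ : ℕ}
  (hpath : ∀ k, k ≤ n → u k (-(2 * (j₀ : ℤ)) - k) false ≤ p)

include hpath

lemma path_infected (i : ℕ∞) :
    ∀ k, k ≤ n + 1 → Xproc i p u η₀ k (-(2 * (j₀ : ℤ)) - k) = true := by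
  intro k
  induction k with
  | zero =>
    intro _
    show η₀ _ = true
    simp only [η₀, decide_eq_true_eq]
    constructor
    · push_cast; omega
    · exact ⟨-(j₀ : ℤ), by push_cast; ring⟩
  | succ k ih =>
    intro hk
    have hk' : k ≤ n := by omega
    have h1 : Xproc i p u η₀ k (-(2 * (j₀ : ℤ)) - k) = true := ih (by omega)
    show (_ || _ || _) = true
    have harg : -(2 * (j₀ : ℤ)) - (k + 1 : ℕ) + 1 = -(2 * (j₀ : ℤ)) - k := by push_cast; ring
    rw [Bool.or_eq_true, Bool.or_eq_true]
    refine Or.inl (Or.inr ?_)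
    rw [Bool.and_eq_true, harg]
    refine ⟨h1, ?_⟩
    simp only [bondOpen, decide_eq_true_eq]
    exact hpath k hk'

lemma ES_nonempty (i : ℕ∞) {k : ℕ} (hk : k ≤ n) :
    (ES p u k (Xproc i p u η₀ k)).Nonempty := by
  refine ⟨-(2 * (j₀ : ℤ)) - k - 1, -(2 * (j₀ : ℤ)) - k, false, ?_, ?_, by simp [dir]; ring⟩
  · exact path_infected hpath i k (by omega)
  · simp only [bondOpen, decide_eq_true_eq]
    exact hpath k hk

lemma edge_ge (i : ℕ∞) : ∀ k, k ≤ n + 1 → -(2 * (j₀ : ℤ)) - k ≤ edge i p u η₀ k := by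
  intro k
  cases k with
  | zero => intro _; show _ ≤ (0:ℤ); push_cast; omega
  | succ k =>
    intro hk
    have hk' : k ≤ n := by omega
    have hmem : -(2 * (j₀ : ℤ)) - k - 1 ∈ ES p u k (Xproc i p u η₀ k) := by
      refine ⟨-(2 * (j₀ : ℤ)) - k, false, path_infected hpath i k (by omega), ?_, by simp [dir]; ring⟩
      simp only [bondOpen, decide_eq_true_eq]
      exact hpath k hk'
    have := le_csSup (ES_bddAbove (X_le i p u k)) hmem
    show _ ≤ sSup (ES p u k (Xproc i p u η₀ k))
    push_cast
    omega

lemma parity (i : ℕ∞) :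
    ∀ k, k ≤ n → ∀ m, Xproc i p u η₀ k m = true → Even (m + k) := by
  intro k
  induction k with
  | zero =>
    intro _ m h
    simp only [Xproc, η₀, decide_eq_true_eq] at h
    simpa using h.2
  | succ k ih =>
    intro hk m h
    have hk' : k ≤ n := by omega
    simp only [Xproc, Bool.or_eq_true, Bool.and_eq_true] at h
    rw [Int.even_iff]
    rcases h with (⟨h1, -⟩ | ⟨h1, -⟩) | hf
    · have := Int.even_iff.1 (ih hk' _ h1); push_cast at this ⊢; omega
    · have := Int.even_iff.1 (ih hk' _ h1); push_cast at this ⊢; omega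
    · simp only [forced, decide_eq_true_eq] at hf
      obtain ⟨hev, -⟩ := hf
      set e := nextEdge p u k (Xproc i p u η₀ k) with hedef
      have hne : (ES p u k (Xproc i p u η₀ k)).Nonempty := ES_nonempty hpath i hk'
      have hmem : e ∈ ES p u k (Xproc i p u η₀ k) := by
        rw [hedef, nextEdge_def]
        exact Int.csSup_mem hne (ES_bddAbove (X_le i p u k))
      obtain ⟨m', j', hm', -, he⟩ := hmem
      have hpar' := Int.even_iff.1 (ih hk' _ hm')
      have hev' := Int.even_iff.1 hev
      have hd1 := dir_le_one j'
      have hd2 := neg_one_le_dir j'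
      have : dir j' = 1 ∨ dir j' = -1 := by cases j' <;> simp [dir]
      push_cast
      omega

/-- Parity of the edge: `edge k + k` is always even. -/
lemma edge_parity (i : ℕ∞) : ∀ k, k ≤ n + 1 → Even (edge i p u η₀ k + k) := by
  intro k
  cases k with
  | zero => intro _; show Even ((0:ℤ) + _); simp
  | succ k =>
    intro hk
    have hk' : k ≤ n := by omega
    have hne : (ES p u k (Xproc i p u η₀ k)).Nonempty := ES_nonempty hpath i hk'
    have hmem : edge i p u η₀ (k+1) ∈ ES p u k (Xproc i p u η₀ k) := by
      show sSup _ ∈ _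
      exact Int.csSup_mem hne (ES_bddAbove (X_le i p u k))
    obtain ⟨m', j', hm', -, he⟩ := hmem
    have hpar' := Int.even_iff.1 (parity hpath i k hk' _ hm')
    have : dir j' = 1 ∨ dir j' = -1 := by cases j' <;> simp [dir]
    rw [Int.even_iff]
    push_cast
    omega

lemma mono (i i' : ℕ∞) (hii : i ≤ i') :
    ∀ k, k ≤ n + 1 →
      (∀ m, Xproc i' p u η₀ k m = true → Xproc i p u η₀ k m = true) ∧
      edge i' p u η₀ k ≤ edge i p u η₀ k := by
  intro k
  induction k with
  | zero => exact fun _ => ⟨fun m h => h, le_refl _⟩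
  | succ k ih =>
    intro hk
    have hk1 : k ≤ n + 1 := by omega
    have hk' : k ≤ n := by omega
    obtain ⟨ihc, -⟩ := ih hk1
    have hsub : ES p u k (Xproc i' p u η₀ k) ⊆ ES p u k (Xproc i p u η₀ k) := by
      rintro x ⟨m, j, hm, hb, rfl⟩
      exact ⟨m, j, ihc m hm, hb, rfl⟩
    have hne' : (ES p u k (Xproc i' p u η₀ k)).Nonempty := ES_nonempty hpath i' hk'
    have hne : (ES p u k (Xproc i p u η₀ k)).Nonempty := hne'.mono hsub
    have hbdd' := ES_bddAbove (p := p) (u := u) (k := k) (X_le i' p u k)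
    have hbdd := ES_bddAbove (p := p) (u := u) (k := k) (X_le i p u k)
    have hee : sSup (ES p u k (Xproc i' p u η₀ k)) ≤ sSup (ES p u k (Xproc i p u η₀ k)) :=
      csSup_le_csSup hbdd hne' hsub
    have hparE : Even (sSup (ES p u k (Xproc i p u η₀ k)) -
        sSup (ES p u k (Xproc i' p u η₀ k))) := by
      have h1 : Even (edge i p u η₀ (k+1) + (k+1)) := edge_parity hpath i (k+1) hk
      have h2 : Even (edge i' p u η₀ (k+1) + (k+1)) := edge_parity hpath i' (k+1) hk
      have e1 : edge i p u η₀ (k+1) = sSup (ES p u k (Xproc i p u η₀ k)) := rfl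
      have e2 : edge i' p u η₀ (k+1) = sSup (ES p u k (Xproc i' p u η₀ k)) := rfl
      rw [e1] at h1; rw [e2] at h2
      rw [Int.even_iff] at h1 h2 ⊢
      omega
    constructor
    · intro m h
      simp only [Xproc, Bool.or_eq_true, Bool.and_eq_true] at h ⊢
      rcases h with (⟨h1, h2⟩ | ⟨h1, h2⟩) | hf
      · exact Or.inl (Or.inl ⟨ihc _ h1, h2⟩)
      · exact Or.inl (Or.inr ⟨ihc _ h1, h2⟩)
      · refine Or.inr ?_
        rw [nextEdge_def] at hf ⊢
        refine forced_mono hii (sub_le_sub_right hee m) ?_ hf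
        simpa using hparE
    · exact hee

end Path

end L38
namespace L38

section Path

variable {p : ℝ} {u : Env} {n j₀ : ℕ}
  (hpath : ∀ k, k ≤ n → u k (-(2 * (j₀ : ℤ)) - k) false ≤ p)

include hpath

lemma eventual_eq (i : ℕ) (hbig : 3 * n + 2 * j₀ + 3 ≤ 2 * i) :
    ∀ k, k ≤ n + 1 →
      edge (i : ℕ∞) p u η₀ k = edge ⊤ p u η₀ k ∧
      ∀ m : ℤ, (n : ℤ) - 2 * i + k < m → Xproc (i : ℕ∞) p u η₀ k m = Xproc ⊤ p u η₀ k m := by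
  intro k
  induction k with
  | zero => exact fun _ => ⟨rfl, fun _ _ => rfl⟩
  | succ k ih =>
    intro hk
    have hk' : k ≤ n := by omega
    obtain ⟨ihE, ihc⟩ := ih (by omega)
    have hmono := (mono hpath (i : ℕ∞) ⊤ le_top k (by omega)).1
    have hsub : ES p u k (Xproc ⊤ p u η₀ k) ⊆ ES p u k (Xproc (i : ℕ∞) p u η₀ k) := by
      rintro x ⟨m, j, hm, hb, rfl⟩
      exact ⟨m, j, hmono m hm, hb, rfl⟩
    have hneT : (ES p u k (Xproc ⊤ p u η₀ k)).Nonempty := ES_nonempty hpath ⊤ hk'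
    have hneI : (ES p u k (Xproc (i : ℕ∞) p u η₀ k)).Nonempty := hneT.mono hsub
    have hbddT := ES_bddAbove (p := p) (u := u) (k := k) (X_le ⊤ p u k)
    have hbddI := ES_bddAbove (p := p) (u := u) (k := k) (X_le (i : ℕ∞) p u k)
    have hgeT : -(2 * (j₀ : ℤ)) - (k + 1 : ℕ) ≤ edge ⊤ p u η₀ (k+1) :=
      edge_ge hpath ⊤ (k+1) hk
    have heT : edge ⊤ p u η₀ (k+1) = sSup (ES p u k (Xproc ⊤ p u η₀ k)) := rfl
    have hEeq : sSup (ES p u k (Xproc (i : ℕ∞) p u η₀ k))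
        = sSup (ES p u k (Xproc ⊤ p u η₀ k)) := by
      refine le_antisymm (csSup_le hneI ?_) (csSup_le_csSup hbddI hneT hsub)
      rintro x ⟨m, j, hm, hb, rfl⟩
      by_cases hm' : (n : ℤ) - 2 * i + k < m
      · refine le_csSup hbddT ⟨m, j, ?_, hb, rfl⟩
        rw [← ihc m hm']; exact hm
      · have hd := dir_le_one j
        have : m + dir j ≤ (n : ℤ) - 2 * i + k + 1 := by omega
        refine le_trans ?_ (heT ▸ hgeT)
        push_cast at this ⊢
        omega
    constructor
    · exact hEeq
    · intro m hm
      have h1 : (n : ℤ) - 2 * i + k < m - 1 := by push_cast at hm ⊢; omega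
      have h2 : (n : ℤ) - 2 * i + k < m + 1 := by push_cast at hm ⊢; omega
      show (_ || _ || _) = (_ || _ || _)
      rw [ihc _ h1, ihc _ h2, forced_top]
      have hfI : forced (i : ℕ∞) (nextEdge p u k (Xproc (i : ℕ∞) p u η₀ k) - m) = false := by
        apply forced_coe_false
        have hle : nextEdge p u k (Xproc (i : ℕ∞) p u η₀ k) ≤ (k : ℤ) + 1 :=
          nextEdge_le (X_le (i : ℕ∞) p u k) (by positivity)
        push_cast at hm
        omega
      rw [hfI]

end Path

end L38
namespace L38

section Meas

variable {Ω : Type*} [MeasurableSpace Ω] {ξ : Ω → Env} {p : ℝ}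
  (hmeas : ∀ n m j, Measurable fun ω => ξ ω n m j)

lemma measurable_of_bool_event {f : Ω → Bool} (h : MeasurableSet {ω | f ω = true}) :
    Measurable f := by
  apply measurable_to_countable'
  intro y
  cases y
  · have : f ⁻¹' {false} = {ω | f ω = true}ᶜ := by
      ext ω
      simp only [Set.mem_preimage, Set.mem_singleton_iff, Set.mem_compl_iff,
        Set.mem_setOf_eq, Bool.not_eq_true]
    rw [this]; exact h.compl
  · exact h

lemma meas_bool_or {f g : Ω → Bool} (hf : Measurable f) (hg : Measurable g) :
    Measurable fun ω => f ω || g ω :=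
  (measurable_of_countable (fun x : Bool × Bool => x.1 || x.2)).comp (hf.prodMk hg)

lemma meas_bool_and {f g : Ω → Bool} (hf : Measurable f) (hg : Measurable g) :
    Measurable fun ω => f ω && g ω :=
  (measurable_of_countable (fun x : Bool × Bool => x.1 && x.2)).comp (hf.prodMk hg)

include hmeas

lemma meas_bondOpen (k : ℕ) (m : ℤ) (j : Bool) :
    Measurable fun ω => bondOpen p (ξ ω) k m j := by
  apply measurable_of_bool_event
  have : {ω | bondOpen p (ξ ω) k m j = true} = (fun ω => ξ ω k m j) ⁻¹' Set.Iic p := by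
    ext ω
    simp only [bondOpen, Set.mem_setOf_eq, Set.mem_preimage, Set.mem_Iic, decide_eq_true_eq]
  rw [this]
  exact (hmeas k m j) measurableSet_Iic

lemma meas_nextEdge {c : Ω → ℤ → Bool} (hc : ∀ m, Measurable fun ω => c ω m) {K : ℤ}
    (hsupp : ∀ ω m, c ω m = true → m ≤ K) (k : ℕ) :
    Measurable fun ω => nextEdge p (ξ ω) k (c ω) := by
  have hmem : ∀ x : ℤ, MeasurableSet {ω | x ∈ ES p (ξ ω) k (c ω)} := by
    intro x
    have heq : {ω | x ∈ ES p (ξ ω) k (c ω)} =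
        ⋃ (m : ℤ), ⋃ (j : Bool), ({ω | c ω m = true} ∩
          {ω | bondOpen p (ξ ω) k m j = true} ∩ {_ω | x = m + dir j}) := by
      ext ω
      simp only [ES, Set.mem_setOf_eq, Set.mem_iUnion, Set.mem_inter_iff]
      tauto
    rw [heq]
    refine MeasurableSet.iUnion fun m => MeasurableSet.iUnion fun j => ?_
    exact (((hc m) (measurableSet_singleton true)).inter
      ((meas_bondOpen hmeas k m j) (measurableSet_singleton true))).inter
      (MeasurableSet.const _)
  apply measurable_to_countable'
  intro z
  have hkey : (fun ω => nextEdge p (ξ ω) k (c ω)) ⁻¹' {z} =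
      ({ω | z ∈ ES p (ξ ω) k (c ω)} ∩
        ⋂ (y : ℤ), ({ω | y ∈ ES p (ξ ω) k (c ω)}ᶜ ∪ {_ω | y ≤ z})) ∪
      ((⋂ (y : ℤ), {ω | y ∈ ES p (ξ ω) k (c ω)}ᶜ) ∩ {_ω | z = 0}) := by
    ext ω
    have hbdd : BddAbove (ES p (ξ ω) k (c ω)) := ES_bddAbove (hsupp ω)
    simp only [Set.mem_preimage, Set.mem_singleton_iff, Set.mem_union, Set.mem_inter_iff,
      Set.mem_iInter, Set.mem_setOf_eq, Set.mem_compl_iff, nextEdge_def]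
    constructor
    · rintro rfl
      rcases Set.eq_empty_or_nonempty (ES p (ξ ω) k (c ω)) with hE | hE
      · exact Or.inr ⟨fun y hy => by rw [hE] at hy; exact hy, by rw [hE, Int.csSup_empty]⟩
      · exact Or.inl ⟨Int.csSup_mem hE hbdd, fun y => or_iff_not_imp_left.2
          (fun hy => le_csSup hbdd (not_not.1 hy))⟩
    · rintro (⟨hz, hub⟩ | ⟨hempty, rfl⟩)
      · refine le_antisymm (csSup_le ⟨z, hz⟩ fun y hy => ?_) (le_csSup hbdd hz)
        rcases hub y with h | h
        · exact absurd hy h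
        · exact h
      · have : ES p (ξ ω) k (c ω) = ∅ := Set.eq_empty_iff_forall_notMem.2 hempty
        rw [this, Int.csSup_empty]
  rw [hkey]
  refine MeasurableSet.union ?_ ?_
  · exact (hmem z).inter (MeasurableSet.iInter fun y =>
      ((hmem y).compl.union (MeasurableSet.const _)))
  · exact (MeasurableSet.iInter fun y => (hmem y).compl).inter (MeasurableSet.const _)

lemma meas_X (i : ℕ∞) : ∀ k m, Measurable fun ω => Xproc i p (ξ ω) η₀ k m := by
  intro k
  induction k with
  | zero =>
    intro m
    show Measurable fun _ => η₀ m
    exact measurable_const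
  | succ k ih =>
    intro m
    show Measurable fun ω =>
      ((Xproc i p (ξ ω) η₀ k (m - 1) && bondOpen p (ξ ω) k (m - 1) true) ||
       (Xproc i p (ξ ω) η₀ k (m + 1) && bondOpen p (ξ ω) k (m + 1) false) ||
       forced i (nextEdge p (ξ ω) k (Xproc i p (ξ ω) η₀ k) - m))
    have hNE : Measurable fun ω => nextEdge p (ξ ω) k (Xproc i p (ξ ω) η₀ k) :=
      meas_nextEdge hmeas ih (fun ω m' h => X_le i p (ξ ω) k m' h) k
    refine meas_bool_or (meas_bool_or ?_ ?_) ?_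
    · exact meas_bool_and (ih _) (meas_bondOpen hmeas k (m-1) true)
    · exact meas_bool_and (ih _) (meas_bondOpen hmeas k (m+1) false)
    · exact (measurable_of_countable (forced i)).comp
        ((measurable_of_countable (fun z : ℤ => z - m)).comp hNE)

lemma meas_edge (i : ℕ∞) (k : ℕ) : Measurable fun ω => edge i p (ξ ω) η₀ k := by
  cases k with
  | zero => exact measurable_const
  | succ k =>
    show Measurable fun ω => nextEdge p (ξ ω) k (Xproc i p (ξ ω) η₀ k)
    exact meas_nextEdge hmeas (meas_X hmeas i k) (fun ω m' h => X_le i p (ξ ω) k m' h) k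

end Meas

end L38
namespace L38

section Prob

variable {Ω : Type*} [MeasureSpace Ω] {ξ : Ω → Env} {p : ℝ}

/-- The event that a given bond variable is at most `p`. -/
def Abond (ξ : Ω → Env) (p : ℝ) (v : ℕ × ℤ × Bool) : Set Ω := {ω | ξ ω v.1 v.2.1 v.2.2 ≤ p}

/-- The index of the `k`-th bond on the left-descending path from `(0, -2j)`. -/
def pathIdx (j k : ℕ) : ℕ × ℤ × Bool := (k, -(2 * (j : ℤ)) - k, false)

/-- The event that the whole left-descending path from `(0, -2j)` is open for `n+1` steps. -/
def Eev (ξ : Ω → Env) (p : ℝ) (n j : ℕ) : Set Ω :=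
  ⋂ k ∈ Finset.range (n + 1), Abond ξ p (pathIdx j k)

lemma pathIdx_inj : Function.Injective (fun jk : ℕ × ℕ => pathIdx jk.1 jk.2) := by
  rintro ⟨j, k⟩ ⟨j', k'⟩ h
  simp only [pathIdx, Prod.mk.injEq] at h
  obtain ⟨rfl, h2, -⟩ := h
  refine Prod.ext ?_ rfl
  omega

lemma mem_Eev {n j : ℕ} {ω : Ω} :
    ω ∈ Eev ξ p n j ↔ ∀ k, k ≤ n → ξ ω k (-(2 * (j : ℤ)) - k) false ≤ p := by
  simp only [Eev, Set.mem_iInter, Finset.mem_range, Abond, pathIdx, Set.mem_setOf_eq]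
  constructor
  · intro h k hk; exact h k (by omega)
  · intro h k hk; exact h k (by omega)

variable (hξ : UniformBonds ξ) (hp : p ∈ Set.Ioc (0 : ℝ) 1)

include hξ

lemma meas_Abond (v : ℕ × ℤ × Bool) : MeasurableSet (Abond ξ p v) :=
  (hξ.2.1 v.1 v.2.1 v.2.2) measurableSet_Iic

lemma meas_Eev (n j : ℕ) : MeasurableSet (Eev ξ p n j) :=
  MeasurableSet.biInter (Finset.range (n+1)).countable_toSet fun k _ => meas_Abond hξ _

include hp

lemma measure_Abond (v : ℕ × ℤ × Bool) : ℙ (Abond ξ p v) = ENNReal.ofReal p := by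
  have h1 : Abond ξ p v = (fun ω => ξ ω v.1 v.2.1 v.2.2) ⁻¹' Set.Iic p := rfl
  have h2 := hξ.2.2.2 v.1 v.2.1 v.2.2
  rw [h1, ← Measure.map_apply (hξ.2.1 v.1 v.2.1 v.2.2) measurableSet_Iic, h2,
    Measure.restrict_apply measurableSet_Iic]
  have h3 : Set.Iic p ∩ Set.Icc 0 1 = Set.Icc 0 p := by
    ext x
    simp only [Set.mem_inter_iff, Set.mem_Iic, Set.mem_Icc]
    have := hp.2
    constructor
    · rintro ⟨h, h0, -⟩; exact ⟨h0, h⟩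
    · rintro ⟨h0, h⟩; exact ⟨h, h0, by linarith⟩
  rw [h3, Real.volume_Icc]
  norm_num

lemma measure_Eev (n j : ℕ) : ℙ (Eev ξ p n j) = (ENNReal.ofReal p) ^ (n + 1) := by
  have hbi : Eev ξ p n j =
      ⋂ v ∈ (Finset.range (n + 1)).image (pathIdx j), Abond ξ p v := by
    ext ω
    simp only [Eev, Set.mem_iInter, Finset.mem_image, Finset.mem_range]
    constructor
    · rintro h v ⟨k, hk, rfl⟩; exact h k hk
    · intro h k hk; exact h _ ⟨k, hk, rfl⟩
  rw [hbi, hξ.2.2.1.meas_biInter (s := Abond ξ p)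
    (fun v _ => ⟨Set.Iic p, measurableSet_Iic, rfl⟩)]
  rw [Finset.prod_image (fun k _ k' _ h => by
    have := pathIdx_inj (a₁ := (j, k)) (a₂ := (j, k')) (by simpa [Prod.ext_iff] using h)
    simpa [Prod.ext_iff] using this)]
  rw [Finset.prod_congr rfl (fun k _ => measure_Abond hξ hp (pathIdx j k)),
    Finset.prod_const, Finset.card_range]

/-- The bad-path probability: probability that none of the first `N` paths is fully open. -/
lemma measure_biInter_compl_Eev (n N : ℕ) :
    ℙ (⋂ j ∈ Finset.range N, (Eev ξ p n j)ᶜ) =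
      (1 - (ENNReal.ofReal p) ^ (n + 1)) ^ N := by
  haveI : IsProbabilityMeasure (ℙ : Measure Ω) := hξ.1
  induction N with
  | zero => simp
  | succ N ih =>
    have hms : ∀ v : ℕ × ℤ × Bool,
        MeasurableSpace.comap (fun ω => ξ ω v.1 v.2.1 v.2.2) inferInstance ≤ _ :=
      fun v => (hξ.2.1 v.1 v.2.1 v.2.2).comap_le
    set m : ℕ × ℤ × Bool → MeasurableSpace Ω :=
      fun v => MeasurableSpace.comap (fun ω => ξ ω v.1 v.2.1 v.2.2) inferInstance with hm
    have hIndep : ProbabilityTheory.iIndep m ℙ := hξ.2.2.1.iIndep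
    set S : Set (ℕ × ℤ × Bool) := {v | ∃ k ≤ n, v = pathIdx N k} with hS
    set T : Set (ℕ × ℤ × Bool) := {v | ∃ j < N, ∃ k ≤ n, v = pathIdx j k} with hT
    have hdisj : Disjoint S T := by
      rw [Set.disjoint_left]
      rintro v ⟨k, hk, rfl⟩ ⟨j', hj', k', hk', hv⟩
      have := pathIdx_inj (a₁ := (N, k)) (a₂ := (j', k')) (by simpa [Prod.ext_iff] using hv)
      simp only [Prod.mk.injEq] at this
      omega
    have hindep2 := indep_iSup_of_disjoint hms hIndep hdisj
    have hmemA : ∀ v : ℕ × ℤ × Bool, MeasurableSet[m v] (Abond ξ p v) :=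
      fun v => ⟨Set.Iic p, measurableSet_Iic, rfl⟩
    have hE1 : MeasurableSet[⨆ v ∈ S, m v] (Eev ξ p n N) := by
      refine MeasurableSet.biInter (Finset.range (n+1)).countable_toSet fun k hk => ?_
      have hle : m (pathIdx N k) ≤ ⨆ v ∈ S, m v :=
        le_iSup₂ (f := fun v (_ : v ∈ S) => m v) (pathIdx N k)
          ⟨k, by simpa [Finset.mem_range] using Nat.lt_succ_iff.mp (Finset.mem_range.mp hk), rfl⟩
      exact hle _ (hmemA _)
    have hE2 : MeasurableSet[⨆ v ∈ T, m v] (⋂ j ∈ Finset.range N, (Eev ξ p n j)ᶜ) := by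
      refine MeasurableSet.biInter (Finset.range N).countable_toSet fun j hj => ?_
      refine MeasurableSet.compl ?_
      refine MeasurableSet.biInter (Finset.range (n+1)).countable_toSet fun k hk => ?_
      have hle : m (pathIdx j k) ≤ ⨆ v ∈ T, m v :=
        le_iSup₂ (f := fun v (_ : v ∈ T) => m v) (pathIdx j k)
          ⟨j, Finset.mem_range.mp hj, k, Nat.lt_succ_iff.mp (Finset.mem_range.mp hk), rfl⟩
      exact hle _ (hmemA _)
    have hsplit : (⋂ j ∈ Finset.range (N+1), (Eev ξ p n j)ᶜ) =
        (Eev ξ p n N)ᶜ ∩ ⋂ j ∈ Finset.range N, (Eev ξ p n j)ᶜ := by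
      rw [Finset.range_add_one, Finset.set_biInter_insert]
    rw [hsplit, (ProbabilityTheory.Indep_iff _ _ _).1 hindep2 _ _ hE1.compl hE2, ih]
    rw [measure_compl (meas_Eev hξ n N) (measure_ne_top _ _), measure_Eev hξ hp n N,
      measure_univ, pow_succ]
    ring

lemma ae_exists_path (n : ℕ) : ∀ᵐ ω ∂(ℙ : Measure Ω), ∃ j : ℕ, ω ∈ Eev ξ p n j := by
  haveI : IsProbabilityMeasure (ℙ : Measure Ω) := hξ.1
  have hq0 : (ENNReal.ofReal p) ^ (n + 1) ≠ 0 := by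
    apply pow_ne_zero
    simpa using hp.1
  have hlt : (1 : ℝ≥0∞) - (ENNReal.ofReal p) ^ (n + 1) < 1 :=
    ENNReal.sub_lt_self (by simp) (by simp) hq0
  have htend := ENNReal.tendsto_pow_atTop_nhds_zero_of_lt_one hlt
  rw [ae_iff]
  have hsub : ∀ N : ℕ, {ω : Ω | ¬∃ j, ω ∈ Eev ξ p n j} ⊆
      ⋂ j ∈ Finset.range N, (Eev ξ p n j)ᶜ := by
    intro N
    intro ω hω
    simp only [Set.mem_setOf_eq, not_exists] at hω
    exact Set.mem_biInter fun j _ => hω j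
  have hle : ∀ N : ℕ, ℙ {ω : Ω | ¬∃ j, ω ∈ Eev ξ p n j} ≤
      (1 - (ENNReal.ofReal p) ^ (n + 1)) ^ N := by
    intro N
    calc ℙ {ω : Ω | ¬∃ j, ω ∈ Eev ξ p n j} ≤ ℙ (⋂ j ∈ Finset.range N, (Eev ξ p n j)ᶜ) :=
          measure_mono (hsub N)
      _ = _ := measure_biInter_compl_Eev hξ hp n N
  exact le_antisymm (ge_of_tendsto htend (Filter.Eventually.of_forall hle)) (zero_le)

end Prob

end L38
namespace L38

section Jpart

variable {Ω : Type*} [MeasureSpace Ω] {ξ : Ω → Env} {p : ℝ}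

/-- The index of the first fully open left-descending path. -/
def Jfun (ξ : Ω → Env) (p : ℝ) (n : ℕ) (ω : Ω) : ℕ := sInf {j | ω ∈ Eev ξ p n j}

variable (hξ : UniformBonds ξ) (hp : p ∈ Set.Ioc (0 : ℝ) 1) (n : ℕ)

include hξ

lemma meas_Jfun : Measurable (Jfun ξ p n) := by
  apply measurable_to_countable'
  intro j
  have hkey : (Jfun ξ p n) ⁻¹' {j} =
      ((Eev ξ p n j ∩ ⋂ j' : ℕ, {ω | j' < j → ω ∉ Eev ξ p n j'}) ∪
        ((⋂ j' : ℕ, (Eev ξ p n j')ᶜ) ∩ {_ω : Ω | j = 0})) := by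
    ext ω
    simp only [Set.mem_preimage, Set.mem_singleton_iff, Set.mem_union, Set.mem_inter_iff,
      Set.mem_iInter, Set.mem_setOf_eq, Set.mem_compl_iff, Jfun]
    constructor
    · rintro rfl
      rcases Set.eq_empty_or_nonempty {j' | ω ∈ Eev ξ p n j'} with hS | hS
      · refine Or.inr ⟨fun j' => by
          intro hj'; exact absurd hj' (by rw [Set.eq_empty_iff_forall_notMem] at hS; exact hS j'),
          by rw [hS, Nat.sInf_empty]⟩
      · exact Or.inl ⟨Nat.sInf_mem hS, fun j' hj' => Nat.notMem_of_lt_sInf hj'⟩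
    · rintro (⟨h1, h2⟩ | ⟨hall, rfl⟩)
      · refine le_antisymm (Nat.sInf_le h1) ?_
        by_contra hlt
        push_neg at hlt
        have hmm := Nat.sInf_mem (s := {j' | ω ∈ Eev ξ p n j'}) ⟨j, h1⟩
        exact h2 _ hlt hmm
      · have : {j' | ω ∈ Eev ξ p n j'} = ∅ :=
          Set.eq_empty_iff_forall_notMem.2 fun j' => hall j'
        rw [this, Nat.sInf_empty]
  rw [hkey]
  have hE : ∀ j' : ℕ, MeasurableSet (Eev ξ p n j') := fun j' => meas_Eev hξ n j'
  refine MeasurableSet.union ?_ ?_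
  · refine (hE j).inter (MeasurableSet.iInter fun j' => ?_)
    have : {ω | j' < j → ω ∉ Eev ξ p n j'} =
        {_ω : Ω | ¬ j' < j} ∪ (Eev ξ p n j')ᶜ := by
      ext ω; simp only [Set.mem_setOf_eq, Set.mem_union, Set.mem_compl_iff]; tauto
    rw [this]
    exact (MeasurableSet.const _).union (hE j').compl
  · exact (MeasurableSet.iInter fun j' => (hE j').compl).inter (MeasurableSet.const _)

omit hξ in
lemma coe_nat_eq_tsum (a : ℕ) : (a : ℝ≥0∞) = ∑' N : ℕ, if N < a then 1 else 0 := by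
  rw [tsum_eq_sum (s := Finset.range a)
    (by intro b hb; rw [Finset.mem_range] at hb; exact if_neg (by omega))]
  rw [Finset.sum_congr rfl (fun b hb => if_pos (Finset.mem_range.mp hb)), Finset.sum_const,
    Finset.card_range, nsmul_eq_mul, mul_one]

include hp

lemma lintegral_Jfun_lt_top : ∫⁻ ω, (Jfun ξ p n ω : ℝ≥0∞) ∂(ℙ : Measure Ω) < ⊤ := by
  haveI : IsProbabilityMeasure (ℙ : Measure Ω) := hξ.1
  set q : ℝ≥0∞ := (ENNReal.ofReal p) ^ (n + 1) with hq
  have hq0 : q ≠ 0 := pow_ne_zero _ (by simpa using hp.1)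
  have hq1 : q ≤ 1 := pow_le_one' (ENNReal.ofReal_le_one.2 hp.2) _
  have hJmeas := meas_Jfun hξ (p := p) (n := n)
  have hSetMeas : ∀ N : ℕ, MeasurableSet {ω : Ω | N < Jfun ξ p n ω} := by
    intro N
    exact hJmeas ((Set.to_countable _).measurableSet (s := {k : ℕ | N < k}))
  have h1 : ∀ ω, (Jfun ξ p n ω : ℝ≥0∞) =
      ∑' N : ℕ, Set.indicator {ω' : Ω | N < Jfun ξ p n ω'} (fun _ => (1:ℝ≥0∞)) ω := by
    intro ω
    rw [coe_nat_eq_tsum]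
    exact tsum_congr fun N => by simp [Set.indicator_apply]
  calc ∫⁻ ω, (Jfun ξ p n ω : ℝ≥0∞) ∂ℙ
      = ∫⁻ ω, ∑' N : ℕ, Set.indicator {ω' : Ω | N < Jfun ξ p n ω'} (fun _ => (1:ℝ≥0∞)) ω ∂ℙ :=
        lintegral_congr h1
    _ = ∑' N : ℕ, ∫⁻ ω, Set.indicator {ω' : Ω | N < Jfun ξ p n ω'} (fun _ => (1:ℝ≥0∞)) ω ∂ℙ :=
        lintegral_tsum fun N => ((measurable_const.indicator (hSetMeas N)).aemeasurable)
    _ = ∑' N : ℕ, ℙ {ω : Ω | N < Jfun ξ p n ω} := by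
        exact tsum_congr fun N => lintegral_indicator_one (hSetMeas N)
    _ ≤ ∑' N : ℕ, (1 - q) ^ (N + 1) := by
        refine ENNReal.tsum_le_tsum fun N => ?_
        rw [← measure_biInter_compl_Eev hξ hp n (N+1)]
        refine measure_mono ?_
        intro ω hω
        simp only [Set.mem_setOf_eq] at hω
        simp only [Set.mem_iInter, Finset.mem_range, Set.mem_compl_iff]
        intro j hj hmem
        have hle := Nat.sInf_le (s := {j' | ω ∈ Eev ξ p n j'}) hmem
        simp only [Jfun] at hω
        omega
    _ = (∑' N : ℕ, (1 - q) ^ N) * (1 - q) := by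
        rw [← ENNReal.tsum_mul_right]
        exact tsum_congr fun N => (pow_succ _ _)
    _ = (1 - (1 - q))⁻¹ * (1 - q) := by rw [ENNReal.tsum_geometric]
    _ = q⁻¹ * (1 - q) := by rw [ENNReal.sub_sub_cancel (by simp) hq1]
    _ < ⊤ := ENNReal.mul_lt_top (ENNReal.inv_lt_top.2 (pos_iff_ne_zero.2 hq0))
        (lt_of_le_of_lt tsub_le_self (by simp))

lemma integrable_Jfun : Integrable (fun ω => (Jfun ξ p n ω : ℝ)) (ℙ : Measure Ω) := by
  refine ⟨((measurable_of_countable (fun k : ℕ => (k : ℝ))).comp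
    (meas_Jfun hξ n)).aestronglyMeasurable, ?_⟩
  have heq : ∀ ω : Ω, ‖((Jfun ξ p n ω : ℕ) : ℝ)‖ₑ = ((Jfun ξ p n ω : ℕ) : ℝ≥0∞) := by
    intro ω
    exact Real.enorm_natCast _
  simp only [HasFiniteIntegral, Function.comp, heq]
  exact lintegral_Jfun_lt_top hξ hp n

end Jpart

end L38

/-- **Lemma 3.8.** For every fixed `n ∈ ℕ` and every `p ∈ (0,1]`,
`E[_pX̄^{(i)}_n] → E[_pX̄^{(∞)}_n]` as `i → ∞`; moreover the convergence is
monotone: the expectations decrease in `i` to the limit. -/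
theorem lemma_3_8 {Ω : Type*} [MeasureSpace Ω] (ξ : Ω → Env)
    (hξ : UniformBonds ξ) (p : ℝ) (hp : p ∈ Set.Ioc (0 : ℝ) 1) (n : ℕ) :
    Antitone (fun i : ℕ => ∫ ω, ((edge (i : ℕ∞) p (ξ ω) η₀ n : ℤ) : ℝ) ∂ℙ) ∧
    Tendsto (fun i : ℕ => ∫ ω, ((edge (i : ℕ∞) p (ξ ω) η₀ n : ℤ) : ℝ) ∂ℙ) atTop
      (nhds (∫ ω, ((edge ⊤ p (ξ ω) η₀ n : ℤ) : ℝ) ∂ℙ)) := by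
  classical
  haveI : IsProbabilityMeasure (ℙ : Measure Ω) := hξ.1
  set F : ℕ∞ → Ω → ℝ := fun i ω => ((edge i p (ξ ω) η₀ n : ℤ) : ℝ) with hF
  have hmeasF : ∀ i : ℕ∞, Measurable (F i) := fun i =>
    (measurable_of_countable (fun z : ℤ => (z : ℝ))).comp (L38.meas_edge hξ.2.1 i n)
  have hae : ∀ᵐ ω ∂(ℙ : Measure Ω), ∃ j : ℕ, ω ∈ L38.Eev ξ p n j := L38.ae_exists_path hξ hp n
  have hpath : ∀ ω : Ω, (∃ j, ω ∈ L38.Eev ξ p n j) →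
      ∀ k, k ≤ n → ξ ω k (-(2 * ((L38.Jfun ξ p n ω : ℕ) : ℤ)) - k) false ≤ p := by
    intro ω hω
    have hmem : ω ∈ L38.Eev ξ p n (L38.Jfun ξ p n ω) :=
      Nat.sInf_mem (s := {j | ω ∈ L38.Eev ξ p n j}) hω
    exact fun k hk => (L38.mem_Eev.1 hmem) k hk
  have hg_int : Integrable (fun ω => 2 * (L38.Jfun ξ p n ω : ℝ) + n) (ℙ : Measure Ω) :=
    ((L38.integrable_Jfun hξ hp n).const_mul 2).add (integrable_const _)
  have hbound : ∀ i : ℕ∞, ∀ᵐ ω ∂(ℙ : Measure Ω),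
      ‖F i ω‖ ≤ 2 * (L38.Jfun ξ p n ω : ℝ) + n := by
    intro i
    filter_upwards [hae] with ω hω
    have hp' := hpath ω hω
    have hub : edge i p (ξ ω) η₀ n ≤ (n : ℤ) := L38.edge_le i p (ξ ω) n
    have hlb : -(2 * ((L38.Jfun ξ p n ω : ℕ) : ℤ)) - n ≤ edge i p (ξ ω) η₀ n :=
      L38.edge_ge hp' i n (by omega)
    have h1 : ((edge i p (ξ ω) η₀ n : ℤ) : ℝ) ≤ ((n : ℤ) : ℝ) := Int.cast_le.2 hub
    have h2 : ((-(2 * ((L38.Jfun ξ p n ω : ℕ) : ℤ)) - n : ℤ) : ℝ) ≤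
        ((edge i p (ξ ω) η₀ n : ℤ) : ℝ) := Int.cast_le.2 hlb
    push_cast at h1 h2
    rw [Real.norm_eq_abs, abs_le]
    have hJ0 : (0 : ℝ) ≤ (L38.Jfun ξ p n ω : ℝ) := Nat.cast_nonneg _
    constructor
    · simp only [hF]; linarith
    · simp only [hF]; linarith
  have hint : ∀ i : ℕ∞, Integrable (F i) (ℙ : Measure Ω) := fun i =>
    Integrable.mono' hg_int (hmeasF i).aestronglyMeasurable (hbound i)
  constructor
  · intro i i' hii
    refine integral_mono_ae (hint (i' : ℕ∞)) (hint (i : ℕ∞)) ?_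
    filter_upwards [hae] with ω hω
    have hp' := hpath ω hω
    have hmono := (L38.mono hp' (i : ℕ∞) (i' : ℕ∞) (by exact_mod_cast hii) n (by omega)).2
    exact Int.cast_le.2 hmono
  · refine tendsto_integral_of_dominated_convergence _
      (fun i => (hmeasF (i : ℕ∞)).aestronglyMeasurable) hg_int
      (fun i => hbound (i : ℕ∞)) ?_
    filter_upwards [hae] with ω hω
    have hp' := hpath ω hω
    have hev : ∀ᶠ (i : ℕ) in atTop, F (i : ℕ∞) ω = F ⊤ ω := by
      refine Filter.eventually_atTop.2 ⟨3 * n + 2 * (L38.Jfun ξ p n ω) + 3, fun i hi => ?_⟩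
      have h := (L38.eventual_eq hp' i (by omega) n (by omega)).1
      simp only [hF, h]
    exact Tendsto.congr' (EventuallyEq.symm hev) tendsto_const_nhds
end
end
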